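/- Let g : ℤ → ℝ and a < b integers. If the function E(t) = g(t) - c is not identically zero on {a,…,b-1} for every constant c (i.e., g is not constant on {a,…,b-1}), then there exists η : ℤ → ℝ with η(a) = η(b) = 0 such that ∑_{t=a}^{b-1} g(t) · (η(t+1) - η(t)) ≠ 0. -/

import Mathlib

theorem discrete_duBois_Reymond_contrapositive (a b : ℤ) (hab : a < b) (g : ℤ → ℝ)
    (hg : ¬ ∃ c : ℝ, ∀ t ∈ Finset.Ico a b, g t = c) :
    ∃ η : ℤ → ℝ, η a = 0 ∧ η b = 0 ∧
      ∑ t ∈ Finset.Ico a b, g t * (η (t + 1) - η t) ≠ 0 := by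
  push_neg at hg
  have h1 : ∃ k ∈ Finset.Ico (a + 1) b, g (k - 1) ≠ g k := by
    by_contra h
    push_neg at h
    have key : ∀ t, a ≤ t → t < b → g t = g a := by
      intro t ht
      refine Int.le_induction (motive := fun t _ => t < b → g t = g a) ?_ ?_ t ht
      · intro _; rfl
      · intro n hn ih hnb
        have h2 := h (n + 1) (by simp only [Finset.mem_Ico]; omega)
        have h3 : n + 1 - 1 = n := by ring
        rw [h3] at h2
        rw [← h2]
        exact ih (by omega)
    obtain ⟨t, ht, hne⟩ := hg (g a)
    simp only [Finset.mem_Ico] at ht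
    exact hne (key t ht.1 ht.2)
  obtain ⟨k, hk, hne⟩ := h1
  simp only [Finset.mem_Ico] at hk
  refine ⟨fun s => if s = k then 1 else 0, by simp; omega, by simp; omega, ?_⟩
  have hcond : ∀ t : ℤ, (t + 1 = k) = (t = k - 1) := fun t => propext (by omega)
  have hsum : ∑ t ∈ Finset.Ico a b, g t *
      ((if t + 1 = k then (1:ℝ) else 0) - (if t = k then 1 else 0)) = g (k - 1) - g k := by
    simp only [hcond, mul_sub, Finset.sum_sub_distrib, mul_ite, mul_one, mul_zero]
    rw [Finset.sum_ite_eq' (Finset.Ico a b) (k - 1) g,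
        Finset.sum_ite_eq' (Finset.Ico a b) k g]
    rw [if_pos (by simp only [Finset.mem_Ico]; omega),
        if_pos (by simp only [Finset.mem_Ico]; omega)]
  rw [hsum]
  exact sub_ne_zero.mpr hne
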